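/- Let k be a field of characteristic ≠ 2 and A a torsion-free abelian group. Suppose c : k× × k× → A is a symplectic Steinberg symbol with finite image that additionally satisfies c(x,y) = c(y⁻¹,x), c(x,y) = c(x,−xy), and the property that for each fixed x the map t ↦ c(x,t²) is a group homomorphism k× → A. Then c(s,t) = c(t,s) = 0 for every nonzero s ∈ k that is a sum of squares of elements of k× and every t ∈ k×. -/

import Mathlib

open BigOperators

/-- Let `k` be a field of characteristic ≠ 2 and `A` a torsion-free abelian
group. If `c : k× × k× → A` is a symplectic Steinberg symbol with finite image which
moreover satisfies `c(x,y) = c(y⁻¹,x)`, `c(x,y) = c(x,−xy)`, and for each fixed `x` the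
map `t ↦ c(x,t²)` is a homomorphism, then `c(s,t) = c(t,s) = 0` for every nonzero sum of
squares `s` and every `t ∈ k×`. -/
theorem statement14 {k A : Type*} [Field k] [AddCommGroup A]
    (hchar : (2 : k) ≠ 0)
    (htf : ∀ n : ℕ, 0 < n → ∀ a : A, n • a = 0 → a = 0)
    (c : k → k → A)
    (hfin : {a : A | ∃ x y : k, x ≠ 0 ∧ y ≠ 0 ∧ c x y = a}.Finite)
    (S1 : ∀ x y z : k, x ≠ 0 → y ≠ 0 → z ≠ 0 →
      c x y + c (x * y) z = c x (y * z) + c y z)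
    (S2a : c 1 1 = 0)
    (S2b : ∀ x y : k, x ≠ 0 → y ≠ 0 → c x y = c x⁻¹ y⁻¹)
    (S3 : ∀ x y : k, x ≠ 0 → y ≠ 0 → x ≠ 1 → c x y = c x ((1 - x) * y))
    (R1 : ∀ x y : k, x ≠ 0 → y ≠ 0 → c x y = c y⁻¹ x)
    (R2 : ∀ x y : k, x ≠ 0 → y ≠ 0 → c x y = c x (-(x * y)))
    (R3hom : ∀ x s t : k, x ≠ 0 → s ≠ 0 → t ≠ 0 →
      c x ((s * t) ^ 2) = c x (s ^ 2) + c x (t ^ 2)) :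
    ∀ s t : k, t ≠ 0 → s ≠ 0 →
      (∃ (n : ℕ) (a : Fin (n + 1) → k), (∀ i, a i ≠ 0) ∧ s = ∑ i, (a i) ^ 2) →
      c s t = 0 ∧ c t s = 0 := by

  -- Step 0: squares in the second slot vanish
  have hsq : ∀ x u : k, x ≠ 0 → u ≠ 0 → c x (u ^ 2) = 0 := by
    intro x u hx hu
    have hpow : ∀ n : ℕ, c x ((u ^ (n + 1)) ^ 2) = (n + 1) • c x (u ^ 2) := by
      intro n
      induction n with
      | zero => simp
      | succ m ih =>
        have e : u ^ (m + 1 + 1) = u ^ (m + 1) * u := by ring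
        have h := R3hom x (u ^ (m + 1)) u hx (pow_ne_zero _ hu) hu
        rw [e, h, ih, succ_nsmul (c x (u ^ 2)) (m + 1)]
    by_contra hne
    have hinj : Function.Injective (fun n : ℕ => (n + 1) • c x (u ^ 2)) := by
      intro m n h
      simp only at h
      by_contra hmn
      rcases Nat.lt_or_ge m n with hlt | hge
      · have key : (n - m) • c x (u ^ 2) + (m + 1) • c x (u ^ 2) = (n + 1) • c x (u ^ 2) := by
          rw [← add_nsmul]; congr 1; omega
        rw [h] at key
        exact hne (htf (n - m) (by omega) _ (add_eq_right.mp key))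
      · have hlt : n < m := by omega
        have key : (m - n) • c x (u ^ 2) + (n + 1) • c x (u ^ 2) = (m + 1) • c x (u ^ 2) := by
          rw [← add_nsmul]; congr 1; omega
        rw [← h] at key
        exact hne (htf (m - n) (by omega) _ (add_eq_right.mp key))
    have hmem : ∀ n : ℕ, (n + 1) • c x (u ^ 2) ∈ {a : A | ∃ x y : k, x ≠ 0 ∧ y ≠ 0 ∧ c x y = a} :=
      fun n => ⟨x, (u ^ (n + 1)) ^ 2, hx, pow_ne_zero _ (pow_ne_zero _ hu), hpow n⟩
    exact Set.infinite_of_injective_forall_mem hinj hmem hfin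
  -- squares in the first slot vanish
  have hsqL : ∀ x u : k, x ≠ 0 → u ≠ 0 → c (u ^ 2) x = 0 := by
    intro x u hx hu
    rw [R1 (u ^ 2) x (pow_ne_zero _ hu) hx]
    exact hsq x⁻¹ u (inv_ne_zero hx) hu
  have hc1r : ∀ x : k, x ≠ 0 → c x 1 = 0 := by
    intro x hx; simpa using hsq x 1 hx one_ne_zero
  -- second-slot square invariance
  have hsq2 : ∀ w z u : k, w ≠ 0 → z ≠ 0 → u ≠ 0 → c w (u ^ 2 * z) = c w z := by
    intro w z u hw hz hu
    have h := S1 w z (u ^ 2) hw hz (pow_ne_zero _ hu)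
    rw [hsq (w * z) u (mul_ne_zero hw hz) hu, hsq z u hz hu, add_zero, add_zero] at h
    rw [mul_comm (u ^ 2) z]
    exact h.symm
  -- first-slot square invariance
  have hsq1 : ∀ w z u : k, w ≠ 0 → z ≠ 0 → u ≠ 0 → c (u ^ 2 * w) z = c w z := by
    intro w z u hw hz hu
    have h := S1 w (u ^ 2) z hw (pow_ne_zero _ hu) hz
    rw [hsq w u hw hu, hsqL z u hz hu, zero_add, add_zero, hsq2 w z u hw hz hu] at h
    rw [mul_comm (u ^ 2) w]
    exact h
  -- symmetry
  have hsymm : ∀ x y : k, x ≠ 0 → y ≠ 0 → c x y = c y x := by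
    intro x y hx hy
    rw [R1 x y hx hy, show (y : k)⁻¹ = (y⁻¹) ^ 2 * y from by field_simp,
      hsq1 y x y⁻¹ hy hx (inv_ne_zero hy)]
  -- (*): c (x*y) y = c y y - c x y
  have hstar : ∀ x y : k, x ≠ 0 → y ≠ 0 → c (x * y) y = c y y - c x y := by
    intro x y hx hy
    have h := S1 x y y hx hy hy
    rw [show y * y = y ^ 2 from by ring, hsq x y hx hy, zero_add] at h
    exact eq_sub_of_add_eq' h
  -- (**): doubling identity
  have hdouble : ∀ x y : k, x ≠ 0 → y ≠ 0 →
      c x y + c x y = c x x + c y y - c (x * y) (x * y) := by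
    intro x y hx hy
    have h := S1 x y (x * y) hx hy (mul_ne_zero hx hy)
    rw [show y * (x * y) = y ^ 2 * x from by ring, hsq2 x x y hx hx hy,
      hsymm y (x * y) hy (mul_ne_zero hx hy), hstar x y hx hy] at h
    have E : (c x y + c x y) - (c x x + c y y - c (x * y) (x * y)) =
        (c x y + c (x * y) (x * y)) - (c x x + (c y y - c x y)) := by abel
    rw [h, sub_self] at E
    exact sub_eq_zero.mp E
  -- c x (-x) = 0
  have hxnegx : ∀ x : k, x ≠ 0 → c x (-x) = 0 := by
    intro x hx
    have h := R2 x 1 hx one_ne_zero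
    rw [mul_one, hc1r x hx] at h
    exact h.symm
  -- q(-x) relation
  have hneg : ∀ x : k, x ≠ 0 → c x x + c (-x) (-x) = c (-1) (-1) := by
    intro x hx
    have h := hdouble x (-x) hx (neg_ne_zero.mpr hx)
    rw [hxnegx x hx, show x * -x = x ^ 2 * (-1) from by ring,
      hsq1 (-1) (x ^ 2 * (-1)) x (neg_ne_zero.mpr one_ne_zero)
        (mul_ne_zero (pow_ne_zero _ hx) (neg_ne_zero.mpr one_ne_zero)) hx,
      hsq2 (-1) (-1) x (neg_ne_zero.mpr one_ne_zero) (neg_ne_zero.mpr one_ne_zero) hx] at h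
    rw [add_zero] at h
    exact sub_eq_zero.mp h.symm
  -- Steinberg relation
  have hstein : ∀ x : k, x ≠ 0 → x ≠ 1 → c x (1 - x) = 0 := by
    intro x hx hx1
    have h := S3 x 1 hx one_ne_zero hx1
    rw [mul_one, hc1r x hx] at h
    exact h.symm
  -- main addition lemma
  have hadd : ∀ a b : k, a ≠ 0 → b ≠ 0 → a + b ≠ 0 →
      (∀ t, t ≠ 0 → c a t = 0) → (∀ t, t ≠ 0 → c b t = 0) →
      ∀ t, t ≠ 0 → c (a + b) t = 0 := by
    intro a b ha hb hs0 hNa hNb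
    set s : k := a + b with hs_def
    have hsi : s⁻¹ ≠ 0 := inv_ne_zero hs0
    have hx0 : a * s⁻¹ ≠ 0 := mul_ne_zero ha hsi
    have hy0 : b * s⁻¹ ≠ 0 := mul_ne_zero hb hsi
    have hx1 : a * s⁻¹ ≠ 1 := by
      intro h
      have : a = s := (mul_inv_eq_one₀ hs0).mp h
      rw [hs_def] at this
      exact hb (left_eq_add.mp this)
    have hy1 : b * s⁻¹ ≠ 1 := by
      intro h
      have : b = s := (mul_inv_eq_one₀ hs0).mp h
      rw [hs_def] at this
      exact ha (right_eq_add.mp this)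
    have e1x : 1 - a * s⁻¹ = b * s⁻¹ := by
      field_simp
      rw [hs_def]; ring
    have e1y : 1 - b * s⁻¹ = a * s⁻¹ := by
      field_simp
      rw [hs_def]; ring
    -- expansions via hdouble for a, b against anything they commute with
    have hA : ∀ z : k, z ≠ 0 → c a a + c z z = c (a * z) (a * z) := by
      intro z hz
      have h := hdouble a z ha hz
      rw [hNa z hz, add_zero] at h
      exact (sub_eq_zero.mp h.symm)
    have hB : ∀ z : k, z ≠ 0 → c b b + c z z = c (b * z) (b * z) := by
      intro z hz
      have h := hdouble b z hb hz
      rw [hNb z hz, add_zero] at h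
      exact (sub_eq_zero.mp h.symm)
    -- Step A : c s s = 0
    have hqs0 : c s s = 0 := by
      have hq1 : c (a * s⁻¹) (b * s⁻¹) = 0 := by
        have := hstein (a * s⁻¹) hx0 hx1
        rw [e1x] at this; exact this
      have hd := hdouble (a * s⁻¹) (b * s⁻¹) hx0 hy0
      rw [hq1] at hd
      have g1 : c (a * s⁻¹) (a * s⁻¹) = c (a * s) (a * s) := by
        rw [show a * s⁻¹ = (s⁻¹) ^ 2 * (a * s) from by field_simp,
          hsq1 (a * s) ((s⁻¹) ^ 2 * (a * s)) s⁻¹ (mul_ne_zero ha hs0)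
            (mul_ne_zero (pow_ne_zero _ hsi) (mul_ne_zero ha hs0)) hsi,
          hsq2 (a * s) (a * s) s⁻¹ (mul_ne_zero ha hs0) (mul_ne_zero ha hs0) hsi]
      have g2 : c (b * s⁻¹) (b * s⁻¹) = c (b * s) (b * s) := by
        rw [show b * s⁻¹ = (s⁻¹) ^ 2 * (b * s) from by field_simp,
          hsq1 (b * s) ((s⁻¹) ^ 2 * (b * s)) s⁻¹ (mul_ne_zero hb hs0)
            (mul_ne_zero (pow_ne_zero _ hsi) (mul_ne_zero hb hs0)) hsi,
          hsq2 (b * s) (b * s) s⁻¹ (mul_ne_zero hb hs0) (mul_ne_zero hb hs0) hsi]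
      have g3 : c (a * s⁻¹ * (b * s⁻¹)) (a * s⁻¹ * (b * s⁻¹)) = c (a * b) (a * b) := by
        rw [show a * s⁻¹ * (b * s⁻¹) = (s⁻¹) ^ 2 * (a * b) from by ring,
          hsq1 (a * b) ((s⁻¹) ^ 2 * (a * b)) s⁻¹ (mul_ne_zero ha hb)
            (mul_ne_zero (pow_ne_zero _ hsi) (mul_ne_zero ha hb)) hsi,
          hsq2 (a * b) (a * b) s⁻¹ (mul_ne_zero ha hb) (mul_ne_zero ha hb) hsi]
      rw [g1, g2, g3, ← hA s hs0, ← hB s hs0] at hd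
      have hAB : c a a + c b b = c (a * b) (a * b) := by
        have h := hdouble a b ha hb
        rw [hNa b hb, add_zero] at h
        exact (sub_eq_zero.mp h.symm)
      rw [← hAB, add_zero] at hd
      refine htf 2 (by norm_num) _ ?_
      rw [two_nsmul, hd]; abel
    -- Step B : invariance c s y = c s (a*s*y)
    have hred : ∀ z : k, z ≠ 0 → c (b * s⁻¹) z = c s z := by
      intro z hz
      have h := S1 b s⁻¹ z hb hsi hz
      rw [hNb s⁻¹ hsi, hNb (s⁻¹ * z) (mul_ne_zero hsi hz), zero_add, zero_add] at h
      rw [h, show (s : k)⁻¹ = (s⁻¹) ^ 2 * s from by field_simp,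
        hsq1 s z s⁻¹ hs0 hz hsi]
    have hinvar : ∀ y : k, y ≠ 0 → c s y = c s (a * s * y) := by
      intro y hy
      have h3 := S3 (b * s⁻¹) y hy0 hy hy1
      rw [e1y] at h3
      rw [hred y hy, hred (a * s⁻¹ * y) (mul_ne_zero hx0 hy)] at h3
      rw [show a * s⁻¹ * y = (s⁻¹) ^ 2 * (a * s * y) from by field_simp,
        hsq2 s (a * s * y) s⁻¹ hs0 (mul_ne_zero (mul_ne_zero ha hs0) hy) hsi] at h3
      exact h3
    -- Step C : conclude
    intro t ht
    have hat0 : a * t ≠ 0 := mul_ne_zero ha ht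
    have hst0 : s * t ≠ 0 := mul_ne_zero hs0 ht
    have hnat0 : -(a * t) ≠ 0 := neg_ne_zero.mpr hat0
    have hast0 : a * (s * t) ≠ 0 := mul_ne_zero ha hst0
    have h1 := hdouble s t hs0 ht
    rw [hqs0, zero_add] at h1
    have h2 : c s t = c s (-(a * t)) := by
      have i1 := hinvar t ht
      have i2 := R2 s (a * s * t) hs0 (mul_ne_zero (mul_ne_zero ha hs0) ht)
      rw [show -(s * (a * s * t)) = s ^ 2 * -(a * t) from by ring,
        hsq2 s (-(a * t)) s hs0 hnat0 hs0] at i2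
      rw [i1, i2]
    have h3 := hdouble s (-(a * t)) hs0 hnat0
    rw [hqs0, zero_add, show s * -(a * t) = -(a * (s * t)) from by ring, ← h2] at h3
    have hn1 : c (-(a * t)) (-(a * t)) = c (-1) (-1) - c (a * t) (a * t) :=
      eq_sub_of_add_eq' (hneg (a * t) hat0)
    have hn2 : c (-(a * (s * t))) (-(a * (s * t))) = c (-1) (-1) - c (a * (s * t)) (a * (s * t)) :=
      eq_sub_of_add_eq' (hneg (a * (s * t)) hast0)
    rw [hn1, hn2, ← hA t ht, ← hA (s * t) hst0] at h3
    refine htf 4 (by norm_num) _ ?_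
    have E : (4 : ℕ) • c s t = (c s t + c s t) + (c s t + c s t) := by abel
    have hsum := congrArg₂ HAdd.hAdd h1 h3
    rw [E, hsum]; abel
  -- induction on the number of squares
  have main : ∀ n : ℕ, ∀ a : Fin (n + 1) → k, (∀ i, a i ≠ 0) →
      (∑ i, (a i) ^ 2) ≠ 0 → ∀ t : k, t ≠ 0 → c (∑ i, (a i) ^ 2) t = 0 := by
    intro n
    induction n with
    | zero =>
      intro a hai hns t ht
      rw [show (∑ i, (a i) ^ 2) = (a 0) ^ 2 from by simp]
      exact hsqL t (a 0) ht (hai 0)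
    | succ m ih =>
      intro a hai hns t ht
      have hsplit : (∑ i, (a i) ^ 2) =
          (∑ i : Fin (m + 1), (a i.castSucc) ^ 2) + (a (Fin.last (m + 1))) ^ 2 :=
        Fin.sum_univ_castSucc _
      by_cases hu : (∑ i : Fin (m + 1), (a i.castSucc) ^ 2) = 0
      · rw [hsplit, hu, zero_add]
        exact hsqL t _ ht (hai _)
      · have hNu := ih (fun i => a i.castSucc) (fun i => hai _) hu
        have hb := hai (Fin.last (m + 1))
        have hNb : ∀ t' : k, t' ≠ 0 → c ((a (Fin.last (m + 1))) ^ 2) t' = 0 :=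
          fun t' ht' => hsqL t' _ ht' hb
        rw [hsplit] at hns ⊢
        exact hadd _ _ hu (pow_ne_zero _ hb) hns hNu hNb t ht
  intro s t ht hs ⟨n, a, hai, hsum⟩
  subst hsum
  have h1 := main n a hai hs t ht
  exact ⟨h1, by rw [hsymm t _ ht hs]; exact h1⟩
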